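/- For positive integers K, ℓ with 1 ≤ ℓ ≤ K, real c > 0 and R > 0, define d_{1,ℓ-1} = max(0, (ℓ-1) - ⌊(2^R-1)/c⌋), d_{2,ℓ} = max(0, ℓ - ⌊(2^R-1)/c⌋) + K - ℓ, and d₂ = max(0, K - ⌊(2^R-1)/c⌋). Then min{ d_{1,ℓ-1} + d_{2,ℓ} : 1 ≤ ℓ ≤ K } = d₂, where d_{1,K} + d_{2,K} is interpreted as d_{1,K-1} + d₂ at ℓ = K. -/
import Mathlib


theorem stmt_18 (K : ℕ) (c R : ℝ) (hK : 1 ≤ K) (hc : 0 < c) (hR : 0 < R)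
    (d1 : ℕ → ℤ) (d2 : ℕ → ℤ) (d₂ : ℤ)
    (hd1 : ∀ ℓ, d1 ℓ = max 0 ((ℓ : ℤ) - ⌊((2:ℝ) ^ R - 1) / c⌋))
    (hd2 : ∀ ℓ, d2 ℓ = max 0 ((ℓ : ℤ) - ⌊((2:ℝ) ^ R - 1) / c⌋) + (K : ℤ) - (ℓ : ℤ))
    (hd₂ : d₂ = max 0 ((K : ℤ) - ⌊((2:ℝ) ^ R - 1) / c⌋)) :
    ((Finset.Icc 1 K).inf' (by simp [hK] : (Finset.Icc 1 K).Nonempty)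
      (fun ℓ => d1 (ℓ - 1) + d2 ℓ)) = d₂ := by
  have h1 : (1:ℝ) < (2:ℝ) ^ R :=
    (Real.one_lt_rpow_iff_of_pos (by norm_num)).mpr (Or.inl ⟨by norm_num, hR⟩)
  set m : ℤ := ⌊((2:ℝ) ^ R - 1) / c⌋ with hmdef
  have hm : 0 ≤ m := Int.floor_nonneg.mpr (div_nonneg (by linarith) hc.le)
  have hmt : ((m.toNat : ℤ)) = m := Int.toNat_of_nonneg hm
  apply le_antisymm
  · by_cases h : m.toNat + 1 ≤ K
    · refine le_trans (Finset.inf'_le _ (b := m.toNat + 1) ?_) ?_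
      · simp only [Finset.mem_Icc]; omega
      · rw [hd1, hd2, hd₂]; push_cast; omega
    · refine le_trans (Finset.inf'_le _ (b := K) ?_) ?_
      · simp only [Finset.mem_Icc]; omega
      · rw [hd1, hd2, hd₂]; push_cast [hK]; omega
  · apply Finset.le_inf'
    intro ℓ hℓ
    simp only [Finset.mem_Icc] at hℓ
    rw [hd1, hd2, hd₂]
    push_cast [hℓ.1]
    omega
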